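/- Let n ≥ 2, let 1 ≤ m < n, and let sector angles α₁, …, α_n ∈ ℝ satisfy α₁ + ⋯ + α_m = π and α_{m+1} + ⋯ + α_n = π (i.e., creases c_m and c_n are collinear). Then for every t ∈ ℝ, the folding angles defined by ρ_m = ρ_n = t and ρ_j = 0 for all j ∉ {m, n} satisfy the single-vertex consistency constraint T_n(α, ρ) = I₃. Hence the solution set of the constraint contains the one-parameter family of foldings along the straight line through the vertex. -/

import Mathlib

open Matrix Real

/-- The rotation matrix about the z-axis. -/
noncomputable def Rz (θ : ℝ) : Matrix (Fin 3) (Fin 3) ℝ :=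
  !![Real.cos θ, -Real.sin θ, 0; Real.sin θ, Real.cos θ, 0; 0, 0, 1]

/-- The rotation matrix about the x-axis. -/
noncomputable def Rx (θ : ℝ) : Matrix (Fin 3) (Fin 3) ℝ :=
  !![1, 0, 0; 0, Real.cos θ, -Real.sin θ; 0, Real.sin θ, Real.cos θ]

lemma Rx_zero : Rx 0 = 1 := by
  ext i j; fin_cases i <;> fin_cases j <;>
    simp [Rx, Matrix.one_apply, Matrix.vecHead, Matrix.vecTail]

lemma Rz_zero : Rz 0 = 1 := by
  ext i j; fin_cases i <;> fin_cases j <;>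
    simp [Rz, Matrix.one_apply, Matrix.vecHead, Matrix.vecTail]

lemma Rz_mul (a b : ℝ) : Rz a * Rz b = Rz (a + b) := by
  ext i j; fin_cases i <;> fin_cases j <;>
    simp [Rz, Matrix.mul_apply, Fin.sum_univ_succ, cos_add, sin_add] <;> ring

lemma prodRz (k : ℕ) (β : ℕ → ℝ) :
    ((List.range k).map (fun j => Rz (β j) * Rx 0)).prod
      = Rz (∑ j ∈ Finset.range k, β j) := by
  induction k with
  | zero => simp [Rz_zero]
  | succ k ih =>
      rw [List.range_succ, List.map_append, List.prod_append, ih]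
      simp [Rx_zero, Rz_mul, Finset.sum_range_succ]

lemma prod_block (k : ℕ) (hk : 1 ≤ k) (β : ℕ → ℝ) (t : ℝ) :
    ((List.range k).map (fun j => Rz (β j) * Rx (if j + 1 = k then t else 0))).prod
      = Rz (∑ j ∈ Finset.range k, β j) * Rx t := by
  obtain ⟨k, rfl⟩ : ∃ k', k = k' + 1 := ⟨k - 1, by omega⟩
  rw [List.range_succ, List.map_append, List.prod_append]
  rw [List.map_congr_left (g := fun j => Rz (β j) * Rx 0)
    (by intro a ha; simp at ha; rw [if_neg (by omega)])]
  rw [prodRz]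
  simp [← Matrix.mul_assoc, Rz_mul, Finset.sum_range_succ]

lemma final (t : ℝ) : Rz π * Rx t * (Rz π * Rx t) = 1 := by
  ext i j; fin_cases i <;> fin_cases j <;>
    simp [Rz, Rx, Matrix.mul_apply, Fin.sum_univ_succ, Matrix.one_apply] <;>
    ring_nf <;> simp [sin_sq_add_cos_sq, cos_sq_add_sin_sq]

/-- The single-vertex consistency matrix `T_n(α, ρ) = ∏_{j=1}^n R_z(α_j)·R_x(ρ_j)`, with
angles indexed `1, …, n` and the product taken in order of increasing index. -/
noncomputable def Tn (n : ℕ) (α ρ : ℕ → ℝ) : Matrix (Fin 3) (Fin 3) ℝ :=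
  ((List.range n).map (fun j => Rz (α (j + 1)) * Rx (ρ (j + 1)))).prod

/-- if `α₁ + ⋯ + α_m = π` and `α_{m+1} + ⋯ + α_n = π` (creases `c_m` and `c_n`
are collinear), then for every `t ∈ ℝ` the folding angles `ρ_m = ρ_n = t`, all other
`ρ_j = 0`, satisfy the single-vertex consistency constraint `T_n(α, ρ) = I₃`. -/
theorem collinear_pair_one_parameter_family (n m : ℕ) (hn : 2 ≤ n) (hm : 1 ≤ m)
    (hmn : m < n) (α : ℕ → ℝ)
    (h₁ : ∑ j ∈ Finset.Icc 1 m, α j = π)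
    (h₂ : ∑ j ∈ Finset.Icc (m + 1) n, α j = π)
    (t : ℝ) :
    Tn n α (fun j => if j = m ∨ j = n then t else 0) = 1 := by
  unfold Tn
  obtain ⟨d, rfl⟩ : ∃ d, n = m + d := ⟨n - m, by omega⟩
  have hd : 1 ≤ d := by omega
  rw [List.range_add, List.map_append, List.prod_append, List.map_map]
  have e1 : ((List.range m).map (fun j => Rz (α (j + 1)) *
      Rx (if j + 1 = m ∨ j + 1 = m + d then t else 0))).prod = Rz π * Rx t := by
    rw [List.map_congr_left (g := fun j => Rz (α (j + 1)) * Rx (if j + 1 = m then t else 0))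
      (by intro a ha
          simp only [List.mem_range] at ha
          simp only [show (a + 1 = m ∨ a + 1 = m + d) ↔ a + 1 = m from by omega])]
    rw [prod_block m hm (fun j => α (j + 1)) t]
    rw [← Finset.Ico_add_one_right_eq_Icc, Finset.sum_Ico_eq_sum_range] at h₁
    congr 1
    rw [← h₁]
    simp [add_comm]
  have e2 : ((List.range d).map ((fun j => Rz (α (j + 1)) *
      Rx (if j + 1 = m ∨ j + 1 = m + d then t else 0)) ∘ (m + ·))).prod = Rz π * Rx t := by
    rw [List.map_congr_left (g := fun j => Rz (α (m + j + 1)) * Rx (if j + 1 = d then t else 0))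
      (by intro a ha
          simp only [List.mem_range] at ha
          simp only [Function.comp]
          simp only [show (m + a + 1 = m ∨ m + a + 1 = m + d) ↔ a + 1 = d from by omega])]
    rw [prod_block d hd (fun j => α (m + j + 1)) t]
    rw [← Finset.Ico_add_one_right_eq_Icc, Finset.sum_Ico_eq_sum_range,
      show m + d + 1 - (m + 1) = d from by omega] at h₂
    rw [show (∑ j ∈ Finset.range d, α (m + j + 1)) = π from by
      rw [← h₂]; exact Finset.sum_congr rfl (fun x _ => by congr 1; omega)]
  rw [e1, e2, final]
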